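/- Let $\{X_i\}_{i\ge 0}$ be real-valued random variables on a common probability space satisfying $\mathbb{P}(X_i \ge a) \le C_1 \exp(-C_2 a^2)$ for all $i$ and all $a>0$, where $C_1, C_2 > 0$. Fix $0<\varrho<1$ and define $S_k = \sum_{i=0}^{k} \varrho^{k-i} X_i$. Then for every $a \ge 2 C_2^{-1/2}(1-\varrho^{1/2})^{-1}$ it holds that $\mathbb{P}(S_k \ge a) \le \tilde{C}_1 \exp(-\tilde{C}_2 a^2)$, where $\tilde{C}_1 = 2C_1 / \min\{\varrho^{-1}-1, 1\}$ and $\tilde{C}_2 = (1-\varrho^{1/2})^2 C_2$. -/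

import Mathlib

open MeasureTheory Finset

private lemma geom_aux (x : ℝ) (hx0 : 0 ≤ x) (hx1 : x < 1) (n : ℕ) :
    ∑ i ∈ range n, x ^ i ≤ (1 - x)⁻¹ := by
  have h1 : 0 < 1 - x := by linarith
  rw [geom_sum_eq (ne_of_lt hx1) n]
  have hp : 0 ≤ x ^ n := pow_nonneg hx0 n
  rw [show x ^ n - 1 = -(1 - x ^ n) by ring, show x - 1 = -(1 - x) by ring,
    neg_div_neg_eq, div_le_iff₀ h1, inv_mul_cancel₀ h1.ne']
  linarith

set_option maxHeartbeats 1000000 in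
/-- Tail bound for an exponentially weighted sum of random variables with
Gaussian-like marginal tails, with no assumption on the joint distribution. -/
theorem stmt_2 {Ω : Type*} [MeasurableSpace Ω] (μ : Measure Ω) [IsProbabilityMeasure μ]
    (X : ℕ → Ω → ℝ) (C1 C2 : ℝ) (hC1 : 0 < C1) (hC2 : 0 < C2)
    (htail : ∀ i : ℕ, ∀ a : ℝ, 0 < a →
      μ {ω | a ≤ X i ω} ≤ ENNReal.ofReal (C1 * Real.exp (-C2 * a ^ 2)))
    (ϱ : ℝ) (hϱ0 : 0 < ϱ) (hϱ1 : ϱ < 1) (k : ℕ) (a : ℝ)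
    (ha : 2 * C2 ^ (-(1 : ℝ) / 2) * (1 - ϱ ^ ((1 : ℝ) / 2))⁻¹ ≤ a) :
    μ {ω | a ≤ ∑ i ∈ range (k + 1), ϱ ^ (k - i) * X i ω} ≤
      ENNReal.ofReal ((2 * C1 / min (ϱ⁻¹ - 1) 1) *
        Real.exp (-((1 - ϱ ^ ((1 : ℝ) / 2)) ^ 2 * C2) * a ^ 2)) := by
  set σ : ℝ := ϱ ^ ((1 : ℝ) / 2) with hσdef
  have hσ0 : 0 < σ := Real.rpow_pos_of_pos hϱ0 _
  have hσ1 : σ < 1 := Real.rpow_lt_one hϱ0.le hϱ1 (by norm_num)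
  have h1σ : 0 < 1 - σ := by linarith
  have hσsq : σ ^ 2 = ϱ := by
    rw [hσdef, ← Real.rpow_natCast (ϱ ^ ((1 : ℝ) / 2)) 2, ← Real.rpow_mul hϱ0.le]
    norm_num
  -- positivity of a
  have hC2r : (0:ℝ) < C2 ^ (-(1:ℝ)/2) := Real.rpow_pos_of_pos hC2 _
  have ha0 : 0 < a :=
    lt_of_lt_of_le (by positivity) ha
  -- main constant c
  set c : ℝ := C2 * ((1 - σ) ^ 2 * a ^ 2) with hcdef
  have hC2rsq : (C2 ^ (-(1:ℝ)/2)) ^ 2 = C2⁻¹ := by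
    rw [← Real.rpow_natCast (C2 ^ (-(1:ℝ)/2)) 2, ← Real.rpow_mul hC2.le]
    norm_num [Real.rpow_neg_one]
  have hc4 : 4 ≤ c := by
    have h1 : 2 * C2 ^ (-(1:ℝ)/2) ≤ a * (1 - σ) := by
      have h := mul_le_mul_of_nonneg_right ha h1σ.le
      rw [mul_assoc, inv_mul_cancel₀ h1σ.ne', mul_one] at h
      exact h
    have h2 : (2 * C2 ^ (-(1:ℝ)/2)) ^ 2 ≤ (a * (1 - σ)) ^ 2 := by
      have h0 : 0 ≤ 2 * C2 ^ (-(1:ℝ)/2) := by positivity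
      exact pow_le_pow_left₀ h0 h1 2
    have h3 : 4 * C2⁻¹ ≤ a ^ 2 * (1 - σ) ^ 2 := by
      have := h2
      rw [mul_pow, mul_pow, hC2rsq] at this
      nlinarith
    have h4 : C2 * C2⁻¹ = 1 := mul_inv_cancel₀ hC2.ne'
    rw [hcdef]
    nlinarith [mul_le_mul_of_nonneg_left h3 hC2.le]
  set m : ℝ := ϱ⁻¹ - 1 with hmdef
  have hm : 0 < m := by
    have hinv : ϱ * ϱ⁻¹ = 1 := mul_inv_cancel₀ hϱ0.ne'
    rw [hmdef]
    nlinarith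
  have hmin : 0 < min m 1 := lt_min hm one_pos
  -- threshold levels
  set b : ℕ → ℝ := fun i => (1 - σ) * a * (σ ^ (k - i))⁻¹ with hbdef
  have hbpos : ∀ i, 0 < b i := fun i => by
    have := pow_pos hσ0 (k - i); positivity
  -- powers relation
  have hpow2 : ∀ n : ℕ, (σ ^ n) ^ 2 = ϱ ^ n := fun n => by
    rw [← pow_mul, mul_comm, pow_mul, hσsq]
  have hpowmul : ∀ n : ℕ, ϱ ^ n * (σ ^ n)⁻¹ = σ ^ n := fun n => by
    rw [← hpow2 n, sq]
    field_simp
  -- inclusion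
  have hsub : {ω | a ≤ ∑ i ∈ range (k + 1), ϱ ^ (k - i) * X i ω} ⊆
      ⋃ i ∈ range (k + 1), {ω | b i ≤ X i ω} := by
    intro ω hω
    by_contra hcon
    simp only [Set.mem_iUnion, Set.mem_setOf_eq, not_exists, not_le] at hcon
    have hlt : ∑ i ∈ range (k + 1), ϱ ^ (k - i) * X i ω
        < ∑ i ∈ range (k + 1), ϱ ^ (k - i) * b i := by
      refine Finset.sum_lt_sum_of_nonempty (nonempty_range_add_one) (fun i hi => ?_)
      exact mul_lt_mul_of_pos_left (hcon i hi) (pow_pos hϱ0 _)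
    have heq : ∑ i ∈ range (k + 1), ϱ ^ (k - i) * b i
        = (1 - σ) * a * ∑ i ∈ range (k + 1), σ ^ i := by
      rw [← Finset.sum_range_reflect (fun i => σ ^ i) (k + 1), Finset.mul_sum]
      refine Finset.sum_congr rfl (fun i hi => ?_)
      simp only [hbdef]
      rw [show ϱ ^ (k - i) * ((1 - σ) * a * (σ ^ (k - i))⁻¹)
            = (1 - σ) * a * (ϱ ^ (k - i) * (σ ^ (k - i))⁻¹) by ring, hpowmul]
      congr 2 <;> omega
    have hg : ∑ i ∈ range (k + 1), σ ^ i ≤ (1 - σ)⁻¹ := geom_aux σ hσ0.le hσ1 _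
    have hfin : (1 - σ) * a * ∑ i ∈ range (k + 1), σ ^ i ≤ a := by
      calc (1 - σ) * a * ∑ i ∈ range (k + 1), σ ^ i
          ≤ (1 - σ) * a * (1 - σ)⁻¹ := by
            apply mul_le_mul_of_nonneg_left hg (by positivity)
        _ = a := by field_simp
    rw [Set.mem_setOf_eq] at hω
    rw [heq] at hlt
    linarith
  clear_value σ c m b
  -- the real-number sum bound
  have hr0 : 0 < Real.exp (-(4 * m)) := Real.exp_pos _
  have hr1 : Real.exp (-(4 * m)) < 1 := by
    rw [Real.exp_lt_one_iff]; linarith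
  have h1r : 0 < 1 - Real.exp (-(4 * m)) := by linarith
  have hterm : ∀ n : ℕ, C1 * Real.exp (-c * (ϱ ^ n)⁻¹)
      ≤ (C1 * Real.exp (-c)) * (Real.exp (-(4 * m))) ^ n := by
    intro n
    have hber : 1 + (n : ℝ) * m ≤ (ϱ ^ n)⁻¹ := by
      have := one_add_mul_le_pow (by linarith : (-2:ℝ) ≤ m) n
      rw [show 1 + m = ϱ⁻¹ by rw [hmdef]; ring, inv_pow] at this
      exact this
    have hexp : -c * (ϱ ^ n)⁻¹ ≤ -c + (-(4 * m)) * n := by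
      have hcpos : (0:ℝ) < c := by linarith
      have h1 : c * (1 + (n:ℝ) * m) ≤ c * (ϱ ^ n)⁻¹ :=
        mul_le_mul_of_nonneg_left hber hcpos.le
      have h2 : 4 * ((n:ℝ) * m) ≤ c * ((n:ℝ) * m) :=
        mul_le_mul_of_nonneg_right hc4 (by positivity)
      nlinarith [h1, h2]
    calc C1 * Real.exp (-c * (ϱ ^ n)⁻¹)
        ≤ C1 * Real.exp (-c + (-(4 * m)) * n) :=
          mul_le_mul_of_nonneg_left (Real.exp_le_exp.mpr hexp) hC1.le
      _ = (C1 * Real.exp (-c)) * (Real.exp (-(4 * m))) ^ n := by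
          rw [Real.exp_add, ← Real.exp_nat_mul]
          ring_nf
  have hkey : min m 1 ≤ 2 * (1 - Real.exp (-(4 * m))) := by
    have h14 : (0:ℝ) < 1 + 4 * m := by linarith
    have he : Real.exp (-(4 * m)) ≤ (1 + 4 * m)⁻¹ := by
      rw [Real.exp_neg]
      exact inv_anti₀ h14 (by linarith [Real.add_one_le_exp (4 * m)])
    have hinv : (1 + 4 * m) * (1 + 4 * m)⁻¹ = 1 := mul_inv_cancel₀ h14.ne'
    have hprod : (1 + 4 * m) * Real.exp (-(4 * m)) ≤ 1 := by
      calc (1 + 4 * m) * Real.exp (-(4 * m)) ≤ (1 + 4 * m) * (1 + 4 * m)⁻¹ :=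
            mul_le_mul_of_nonneg_left he h14.le
        _ = 1 := hinv
    rcases le_total m 1 with h | h
    · rw [min_eq_left h]
      nlinarith [hprod, hr0.le, hm.le, sq_nonneg m]
    · rw [min_eq_right h]
      nlinarith [hprod, hr0.le, mul_le_mul_of_nonneg_right h hr0.le]
  have hreal : ∑ i ∈ range (k + 1), C1 * Real.exp (-C2 * (b i) ^ 2)
      ≤ (2 * C1 / min m 1) * Real.exp (-((1 - σ) ^ 2 * C2) * a ^ 2) := by
    have hb2 : ∀ i, -C2 * (b i) ^ 2 = -c * (ϱ ^ (k - i))⁻¹ := by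
      intro i
      simp only [hbdef, hcdef]
      rw [mul_pow, mul_pow, inv_pow, hpow2]
      ring
    calc ∑ i ∈ range (k + 1), C1 * Real.exp (-C2 * (b i) ^ 2)
        = ∑ i ∈ range (k + 1), C1 * Real.exp (-c * (ϱ ^ (k - i))⁻¹) := by
          exact Finset.sum_congr rfl (fun i _ => by rw [hb2 i])
      _ ≤ ∑ i ∈ range (k + 1), (C1 * Real.exp (-c)) * (Real.exp (-(4 * m))) ^ (k - i) :=
          Finset.sum_le_sum (fun i _ => hterm (k - i))
      _ = (C1 * Real.exp (-c)) * ∑ i ∈ range (k + 1), (Real.exp (-(4 * m))) ^ i := by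
          rw [← Finset.sum_range_reflect (fun i => (Real.exp (-(4 * m))) ^ i) (k + 1),
            ← Finset.mul_sum]
          refine congrArg _ (Finset.sum_congr rfl (fun i hi => ?_))
          congr 1 <;> omega
      _ ≤ (C1 * Real.exp (-c)) * (1 - Real.exp (-(4 * m)))⁻¹ :=
          mul_le_mul_of_nonneg_left (geom_aux _ hr0.le hr1 _) (by positivity)
      _ ≤ (2 * C1 / min m 1) * Real.exp (-((1 - σ) ^ 2 * C2) * a ^ 2) := by
          rw [show -((1 - σ) ^ 2 * C2) * a ^ 2 = -c by rw [hcdef]; ring]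
          rw [show (C1 * Real.exp (-c)) * (1 - Real.exp (-(4 * m)))⁻¹
              = (C1 * (1 - Real.exp (-(4 * m)))⁻¹) * Real.exp (-c) by ring]
          apply mul_le_mul_of_nonneg_right _ (Real.exp_pos _).le
          have hdiv : (1 - Real.exp (-(4 * m)))⁻¹ ≤ 2 / min m 1 := by
            rw [inv_eq_one_div, div_le_div_iff₀ h1r hmin]
            linarith [hkey]
          calc C1 * (1 - Real.exp (-(4 * m)))⁻¹ ≤ C1 * (2 / min m 1) :=
                mul_le_mul_of_nonneg_left hdiv hC1.le
            _ = 2 * C1 / min m 1 := by ring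
  -- measure calculation
  calc μ {ω | a ≤ ∑ i ∈ range (k + 1), ϱ ^ (k - i) * X i ω}
      ≤ μ (⋃ i ∈ range (k + 1), {ω | b i ≤ X i ω}) := measure_mono hsub
    _ ≤ ∑ i ∈ range (k + 1), μ {ω | b i ≤ X i ω} := measure_biUnion_finset_le _ _
    _ ≤ ∑ i ∈ range (k + 1), ENNReal.ofReal (C1 * Real.exp (-C2 * (b i) ^ 2)) :=
        Finset.sum_le_sum (fun i _ => htail i (b i) (hbpos i))
    _ = ENNReal.ofReal (∑ i ∈ range (k + 1), C1 * Real.exp (-C2 * (b i) ^ 2)) := by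
        rw [ENNReal.ofReal_sum_of_nonneg (fun i _ => by positivity)]
    _ ≤ _ := ENNReal.ofReal_le_ofReal hreal
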